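/- Fix n agents, m items, valuations v_i(j) ∈ ℝ, a constant c > 0 (the value of the added item m+1 for every agent), and ε > 0. Let P = {(i,j) : i ∈ [n], j ∈ [m], v_i(j) ≠ 0}. For a perturbation vector e = (e_{ij})_{(i,j)∈P} ∈ ℝ^P define v̄^e by v̄^e_i(j) = v_i(j) − e_{ij} for (i,j) ∈ P, v̄^e_i(j) = 0 when j ≤ m and v_i(j) = 0, and v̄^e_i(m+1) = c for all i. Then the set of e ∈ [0,ε]^P for which there exists a simple cycle (j_1, i_1, j_2, i_2, …, j_k, i_k, j_1), k ≥ 2, in the complete bipartite graph between the n agents and the m+1 items (no agent or item repeated), with v̄^e_{i_ℓ}(j_ℓ) ≠ 0 and v̄^e_{i_ℓ}(j_{ℓ+1}) ≠ 0 for all ℓ ∈ [k] (indices cyclic, j_{k+1} = j_1) and ∏_{ℓ=1}^{k} v̄^e_{i_ℓ}(j_ℓ)/v̄^e_{i_ℓ}(j_{ℓ+1}) = 1, has Lebesgue measure zero in ℝ^P. -/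

import Mathlib

open Finset MeasureTheory
open scoped Classical

/-- The perturbed valuation `v̄^e`: for an original item `j ≤ m` with `v i j ≠ 0`
we subtract the perturbation `e (i,j)`; zero values stay zero; the added item
`m+1` is valued `c` by everyone. -/
noncomputable def vbar {n m : ℕ} (v : Fin n → Fin m → ℝ) (c : ℝ)
    (e : {p : Fin n × Fin m // v p.1 p.2 ≠ 0} → ℝ) (i : Fin n) (j : Fin (m+1)) : ℝ :=
  if h : (j : ℕ) < m then
    (if hv : v i (j.castLT h) ≠ 0 then v i (j.castLT h) - e ⟨(i, j.castLT h), hv⟩ else 0)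
  else c

lemma null_of_line_subsingleton {ι : Type*} [Fintype ι] (p0 : ι) (S : Set (ι → ℝ))
    (hS : MeasurableSet S)
    (h : ∀ e₁ e₂, e₁ ∈ S → e₂ ∈ S → (∀ i, i ≠ p0 → e₁ i = e₂ i) → e₁ = e₂) :
    volume S = 0 := by
  classical
  set p : ι → Prop := fun i => i ≠ p0 with hp
  let φ : (ι → ℝ) ≃ᵐ ({i // p i} → ℝ) × ({i // ¬ p i} → ℝ) :=
    MeasurableEquiv.piEquivPiSubtypeProd (fun _ : ι => ℝ) p
  have hmp := MeasureTheory.volume_preserving_piEquivPiSubtypeProd (fun _ : ι => ℝ) p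
  have himg : MeasurableSet (φ '' S) := by
    rw [MeasurableEquiv.image_eq_preimage_symm]
    exact φ.symm.measurable hS
  have hv : volume S = volume (φ '' S) := by
    rw [← hmp.measure_preimage_equiv (φ '' S), Set.preimage_image_eq S φ.injective]
  rw [hv]
  haveI : Nonempty {i // ¬ p i} := ⟨⟨p0, by simp [hp]⟩⟩
  rw [MeasureTheory.Measure.volume_eq_prod _ _, MeasureTheory.Measure.measure_prod_null himg]
  filter_upwards with a
  have hsub : (Prod.mk a ⁻¹' (φ '' S)).Subsingleton := by
    intro b1 hb1 b2 hb2
    simp only [Set.mem_preimage] at hb1 hb2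
    have he1 : φ.symm (a, b1) ∈ S := by
      rcases hb1 with ⟨x, hx, hEq⟩
      rw [← hEq, φ.symm_apply_apply]; exact hx
    have he2 : φ.symm (a, b2) ∈ S := by
      rcases hb2 with ⟨x, hx, hEq⟩
      rw [← hEq, φ.symm_apply_apply]; exact hx
    have heval : ∀ b : {i // ¬ p i} → ℝ, ∀ i : ι, ∀ hi : ¬ p i,
        φ.symm (a, b) i = b ⟨i, hi⟩ := by
      intro b i hi
      simp only [φ, MeasurableEquiv.piEquivPiSubtypeProd, Equiv.piEquivPiSubtypeProd,
        MeasurableEquiv.symm, MeasurableEquiv.coe_mk, Equiv.symm, Equiv.coe_fn_mk]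
      rw [dif_neg hi]
    have hevalp : ∀ b : {i // ¬ p i} → ℝ, ∀ i : ι, ∀ hi : p i,
        φ.symm (a, b) i = a ⟨i, hi⟩ := by
      intro b i hi
      simp only [φ, MeasurableEquiv.piEquivPiSubtypeProd, Equiv.piEquivPiSubtypeProd,
        MeasurableEquiv.symm, MeasurableEquiv.coe_mk, Equiv.symm, Equiv.coe_fn_mk]
      rw [dif_pos hi]
    have heq : φ.symm (a, b1) = φ.symm (a, b2) := by
      apply h _ _ he1 he2
      intro i hi
      rw [hevalp b1 i hi, hevalp b2 i hi]
    funext j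
    have hj : (j : ι) = p0 := not_not.mp j.2
    have hj2 : ¬ p (j : ι) := j.2
    rw [← heval b1 j hj2, ← heval b2 j hj2, heq]
  exact hsub.measure_zero _

lemma measurable_vbar {n m : ℕ} (v : Fin n → Fin m → ℝ) (c : ℝ) (i : Fin n) (j : Fin (m+1)) :
    Measurable fun e : {p : Fin n × Fin m // v p.1 p.2 ≠ 0} → ℝ => vbar v c e i j := by
  unfold vbar
  split_ifs with h hv
  · exact measurable_const.sub (measurable_pi_apply _)
  · exact measurable_const
  · exact measurable_const


/-- the set of perturbation vectors `e ∈ [0,ε]^P` for which the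
perturbed instance has a "degenerate" simple cycle (alternating distinct items and
distinct agents, all edge values nonzero, product of value ratios equal to 1)
has Lebesgue measure zero. Cycles of length `k ≥ 2` are encoded with index type
`Fin (k+2)`, whose cyclic addition realises the cyclic successor `ℓ + 1`. -/
theorem stmt2 (n m : ℕ) (v : Fin n → Fin m → ℝ) (c ε : ℝ) (hc : 0 < c) (hε : 0 < ε) :
    volume {e : {p : Fin n × Fin m // v p.1 p.2 ≠ 0} → ℝ |
      (∀ p, e p ∈ Set.Icc (0:ℝ) ε) ∧
      ∃ (k : ℕ) (js : Fin (k+2) → Fin (m+1)) (ags : Fin (k+2) → Fin n),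
        Function.Injective js ∧ Function.Injective ags ∧
        (∀ l, vbar v c e (ags l) (js l) ≠ 0 ∧ vbar v c e (ags l) (js (l+1)) ≠ 0) ∧
        (∏ l, vbar v c e (ags l) (js l) / vbar v c e (ags l) (js (l+1))) = 1} = 0 := by
  classical
  apply measure_mono_null
    (t := ⋃ (k : ℕ), ⋃ (js : Fin (k+2) → Fin (m+1)), ⋃ (ags : Fin (k+2) → Fin n),
      {e : {p : Fin n × Fin m // v p.1 p.2 ≠ 0} → ℝ |
        Function.Injective js ∧ Function.Injective ags ∧
        (∀ l, vbar v c e (ags l) (js l) ≠ 0 ∧ vbar v c e (ags l) (js (l+1)) ≠ 0) ∧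
        (∏ l, vbar v c e (ags l) (js l) / vbar v c e (ags l) (js (l+1))) = 1})
  · rintro e ⟨-, k, js, ags, hj, ha, hnz, hpr⟩
    exact Set.mem_iUnion.mpr ⟨k, Set.mem_iUnion.mpr ⟨js, Set.mem_iUnion.mpr
      ⟨ags, hj, ha, hnz, hpr⟩⟩⟩
  refine measure_iUnion_null fun k => measure_iUnion_null fun js =>
    measure_iUnion_null fun ags => ?_
  by_cases hj : Function.Injective js
  swap
  · have : {e : {p : Fin n × Fin m // v p.1 p.2 ≠ 0} → ℝ |
        Function.Injective js ∧ Function.Injective ags ∧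
        (∀ l, vbar v c e (ags l) (js l) ≠ 0 ∧ vbar v c e (ags l) (js (l+1)) ≠ 0) ∧
        (∏ l, vbar v c e (ags l) (js l) / vbar v c e (ags l) (js (l+1))) = 1} = ∅ := by
      ext e; simp [hj]
    rw [this]; exact measure_empty
  by_cases ha : Function.Injective ags
  swap
  · have : {e : {p : Fin n × Fin m // v p.1 p.2 ≠ 0} → ℝ |
        Function.Injective js ∧ Function.Injective ags ∧
        (∀ l, vbar v c e (ags l) (js l) ≠ 0 ∧ vbar v c e (ags l) (js (l+1)) ≠ 0) ∧
        (∏ l, vbar v c e (ags l) (js l) / vbar v c e (ags l) (js (l+1))) = 1} = ∅ := by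
      ext e; simp [ha]
    rw [this]; exact measure_empty
  apply measure_mono_null
    (t := {e : {p : Fin n × Fin m // v p.1 p.2 ≠ 0} → ℝ |
      (∀ l, vbar v c e (ags l) (js l) ≠ 0 ∧ vbar v c e (ags l) (js (l+1)) ≠ 0) ∧
      (∏ l, vbar v c e (ags l) (js l) / vbar v c e (ags l) (js (l+1))) = 1})
  · rintro e ⟨-, -, hnz, hpr⟩; exact ⟨hnz, hpr⟩
  -- find an edge (ags l0, js l0) with js l0 an original item
  have hl0 : ∃ l0 : Fin (k+2), (js l0 : ℕ) < m := by
    by_contra hcon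
    push_neg at hcon
    have h0 : (js 0 : ℕ) = m := le_antisymm (Nat.lt_succ_iff.mp (js 0).isLt) (hcon 0)
    have h1 : (js 1 : ℕ) = m := le_antisymm (Nat.lt_succ_iff.mp (js 1).isLt) (hcon 1)
    have h01 : (0 : Fin (k+2)) = 1 := hj (Fin.ext (h0.trans h1.symm))
    have := congrArg Fin.val h01
    simp at this
  obtain ⟨l0, hl0⟩ := hl0
  by_cases hv0 : v (ags l0) ((js l0).castLT hl0) = 0
  · -- the set is empty: vbar at that edge is 0
    have : {e : {p : Fin n × Fin m // v p.1 p.2 ≠ 0} → ℝ |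
        (∀ l, vbar v c e (ags l) (js l) ≠ 0 ∧ vbar v c e (ags l) (js (l+1)) ≠ 0) ∧
        (∏ l, vbar v c e (ags l) (js l) / vbar v c e (ags l) (js (l+1))) = 1} = ∅ := by
      ext e
      simp only [Set.mem_setOf_eq, Set.mem_empty_iff_false, iff_false, not_and]
      intro hnz _
      apply (hnz l0).1
      unfold vbar
      rw [dif_pos hl0, dif_neg (not_not_intro hv0)]
    rw [this]; exact measure_empty
  -- main case: apply the Fubini lemma at coordinate p0
  have hl0ne : l0 + 1 ≠ l0 := by
    intro hEq
    have hc1 := congrArg Fin.val hEq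
    rw [Fin.val_add_one] at hc1
    split_ifs at hc1 with hlast
    · have := congrArg Fin.val hlast
      simp [Fin.val_last] at this
      omega
    · omega
  apply null_of_line_subsingleton (⟨(ags l0, (js l0).castLT hl0), hv0⟩ :
    {p : Fin n × Fin m // v p.1 p.2 ≠ 0})
  · -- measurability
    have hrw : {e : {p : Fin n × Fin m // v p.1 p.2 ≠ 0} → ℝ |
        (∀ l, vbar v c e (ags l) (js l) ≠ 0 ∧ vbar v c e (ags l) (js (l+1)) ≠ 0) ∧
        (∏ l, vbar v c e (ags l) (js l) / vbar v c e (ags l) (js (l+1))) = 1}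
      = (⋂ l, ({e : {p : Fin n × Fin m // v p.1 p.2 ≠ 0} → ℝ | vbar v c e (ags l) (js l) = 0}ᶜ ∩
          {e : {p : Fin n × Fin m // v p.1 p.2 ≠ 0} → ℝ | vbar v c e (ags l) (js (l+1)) = 0}ᶜ)) ∩
        ((fun e => ∏ l, vbar v c e (ags l) (js l) / vbar v c e (ags l) (js (l+1))) ⁻¹' {1}) := by
      ext e
      simp [Set.mem_iInter, forall_and]
    rw [hrw]
    refine MeasurableSet.inter (MeasurableSet.iInter fun l => MeasurableSet.inter ?_ ?_) ?_
    · exact ((measurable_vbar v c _ _) (measurableSet_singleton 0)).compl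
    · exact ((measurable_vbar v c _ _) (measurableSet_singleton 0)).compl
    · exact (Finset.measurable_prod univ fun l _ =>
        ((measurable_vbar v c _ _).div (measurable_vbar v c _ _))) (measurableSet_singleton 1)
  · -- lines parallel to axis p0 meet the set in at most one point
    rintro e1 e2 ⟨hnz1, hpr1⟩ ⟨hnz2, hpr2⟩ hagree
    have key : ∀ (i : Fin n) (j : Fin (m+1)), ¬(i = ags l0 ∧ j = js l0) →
        vbar v c e1 i j = vbar v c e2 i j := by
      intro i j hij
      unfold vbar
      split_ifs with h hv
      · congr 1
        apply hagree
        intro hEq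
        apply hij
        have hval : (i, j.castLT h) = (ags l0, (js l0).castLT hl0) :=
          congrArg Subtype.val hEq
        have hA : i = ags l0 := (Prod.ext_iff.mp hval).1
        have h2 : j.castLT h = (js l0).castLT hl0 := (Prod.ext_iff.mp hval).2
        have h3 : ((j.castLT h : Fin m) : ℕ) = (((js l0).castLT hl0 : Fin m) : ℕ) :=
          congrArg Fin.val h2
        exact ⟨hA, Fin.ext h3⟩
      · rfl
      · rfl
    have hll : ∀ l : Fin (k+2), l ≠ l0 →
        vbar v c e1 (ags l) (js l) = vbar v c e2 (ags l) (js l) := by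
      intro l hl
      exact key _ _ (fun hpair => hl (ha hpair.1))
    have hsucc : ∀ l, vbar v c e1 (ags l) (js (l+1)) = vbar v c e2 (ags l) (js (l+1)) := by
      intro l
      apply key
      rintro ⟨hA, hB⟩
      have hL : l = l0 := ha hA
      subst hL
      exact hl0ne (hj hB)
    have hBeq : (∏ l, vbar v c e1 (ags l) (js (l+1)))
        = ∏ l, vbar v c e2 (ags l) (js (l+1)) :=
      Finset.prod_congr rfl fun l _ => hsucc l
    have hgh1 : (∏ l, vbar v c e1 (ags l) (js l))
        = ∏ l, vbar v c e1 (ags l) (js (l+1)) := by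
      rw [Finset.prod_div_distrib] at hpr1
      exact (div_eq_one_iff_eq (Finset.prod_ne_zero_iff.mpr fun l _ => (hnz1 l).2)).mp hpr1
    have hgh2 : (∏ l, vbar v c e2 (ags l) (js l))
        = ∏ l, vbar v c e2 (ags l) (js (l+1)) := by
      rw [Finset.prod_div_distrib] at hpr2
      exact (div_eq_one_iff_eq (Finset.prod_ne_zero_iff.mpr fun l _ => (hnz2 l).2)).mp hpr2
    have hAeq : (∏ l ∈ univ.erase l0, vbar v c e1 (ags l) (js l))
        = ∏ l ∈ univ.erase l0, vbar v c e2 (ags l) (js l) :=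
      Finset.prod_congr rfl fun l hl => hll l (Finset.ne_of_mem_erase hl)
    have hAne : (∏ l ∈ univ.erase l0, vbar v c e1 (ags l) (js l)) ≠ 0 :=
      Finset.prod_ne_zero_iff.mpr fun l _ => (hnz1 l).1
    have hfin : vbar v c e1 (ags l0) (js l0) = vbar v c e2 (ags l0) (js l0) := by
      have h1 := Finset.mul_prod_erase univ (fun l => vbar v c e1 (ags l) (js l)) (mem_univ l0)
      have h2 := Finset.mul_prod_erase univ (fun l => vbar v c e2 (ags l) (js l)) (mem_univ l0)
      have : vbar v c e1 (ags l0) (js l0) * (∏ l ∈ univ.erase l0, vbar v c e1 (ags l) (js l))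
          = vbar v c e2 (ags l0) (js l0) * (∏ l ∈ univ.erase l0, vbar v c e1 (ags l) (js l)) := by
        rw [h1, hAeq, h2, hgh1, hgh2, hBeq]
      exact mul_right_cancel₀ hAne this
    have hp0 : e1 (⟨(ags l0, (js l0).castLT hl0), hv0⟩ :
        {p : Fin n × Fin m // v p.1 p.2 ≠ 0}) = e2 ⟨(ags l0, (js l0).castLT hl0), hv0⟩ := by
      unfold vbar at hfin
      simp only [dif_pos hl0, dif_pos hv0] at hfin
      linarith [hfin]
    funext i
    by_cases hi : i = ⟨(ags l0, (js l0).castLT hl0), hv0⟩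
    · rw [hi]; exact hp0
    · exact hagree i hi
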